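/- arXiv:2501.09323 — 5 statements merged into one kernel-verified Lean document; each statement's English description precedes it below -/
import Mathlib

section
/- Let ψ : [0,∞) → ℝ be a continuous function with ψ(0) ≥ 0, and define x(t) = Γ(ψ)(t) = ψ(t) − min(0, inf_{s∈[0,t]} ψ(s)) and φ(t) = x(t) − ψ(t). Then: x is continuous; x(t) ≥ 0 for all t ≥ 0; φ is nondecreasing with φ(0) = 0; and φ increases only when x is at zero, in the sense that for all 0 ≤ a ≤ b, if x(s) > 0 for every s ∈ [a,b], then φ(b) = φ(a). -/
open Set

/-- Skorohod reflection on ℝ₊: existence.  For a continuous `ψ : [0,∞) → ℝ` with `ψ 0 ≥ 0`,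
the pair `(x, φ)` given by `x t = ψ t - min 0 (inf_{s ∈ [0,t]} ψ s)` and `φ = x - ψ`
solves the Skorohod reflection problem: `x` is continuous and nonnegative, `φ` is
nondecreasing with `φ 0 = 0`, and `φ` is constant on any interval where `x` stays positive. -/
theorem skorohod_reflection_existence
    (ψ : ℝ → ℝ) (hψ : ContinuousOn ψ (Ici 0)) (hψ0 : 0 ≤ ψ 0)
    (x φ : ℝ → ℝ)
    (hx : ∀ t, x t = ψ t - min 0 (sInf (ψ '' Icc 0 t)))
    (hφ : ∀ t, φ t = x t - ψ t) :
    ContinuousOn x (Ici 0) ∧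
    (∀ t, 0 ≤ t → 0 ≤ x t) ∧
    MonotoneOn φ (Ici 0) ∧
    φ 0 = 0 ∧
    (∀ a b, 0 ≤ a → a ≤ b → (∀ s ∈ Icc a b, 0 < x s) → φ b = φ a) := by
  set m : ℝ → ℝ := fun t => sInf (ψ '' Icc 0 t) with hmdef
  have hcomp : ∀ a b : ℝ, 0 ≤ a → IsCompact (ψ '' Icc a b) := by
    intro a b ha
    exact (isCompact_Icc).image_of_continuousOn (hψ.mono (fun s hs => le_trans ha hs.1))
  have hne : ∀ a b : ℝ, a ≤ b → (ψ '' Icc a b).Nonempty :=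
    fun a b hab => (nonempty_Icc.mpr hab).image ψ
  have hbdd : ∀ a b : ℝ, 0 ≤ a → BddBelow (ψ '' Icc a b) :=
    fun a b ha => (hcomp a b ha).bddBelow
  have hmem : ∀ a b : ℝ, 0 ≤ a → a ≤ b → sInf (ψ '' Icc a b) ∈ ψ '' Icc a b :=
    fun a b ha hab => (hcomp a b ha).sInf_mem (hne a b hab)
  have h_le : ∀ t : ℝ, 0 ≤ t → m t ≤ ψ t := fun t ht =>
    csInf_le (hbdd 0 t le_rfl) ⟨t, ⟨ht, le_rfl⟩, rfl⟩
  have h_anti : ∀ a b : ℝ, 0 ≤ a → a ≤ b → m b ≤ m a := by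
    intro a b ha hab
    exact csInf_le_csInf (hbdd 0 b le_rfl) (hne 0 a ha)
      (image_mono (f := ψ) (Icc_subset_Icc le_rfl hab))
  have h_split : ∀ a b : ℝ, 0 ≤ a → a ≤ b → m b = min (m a) (sInf (ψ '' Icc a b)) := by
    intro a b ha hab
    have hI : Icc (0:ℝ) b = Icc 0 a ∪ Icc a b := (Icc_union_Icc_eq_Icc ha hab).symm
    show sInf (ψ '' Icc 0 b) = _
    rw [hI, image_union, csInf_union (hbdd 0 a le_rfl) (hne 0 a ha) (hbdd a b ha) (hne a b hab)]
  -- continuity of m on Ici 0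
  have hmc : ContinuousOn m (Ici 0) := by
    intro t₀ ht₀
    rw [Metric.continuousWithinAt_iff]
    intro ε hε
    obtain ⟨δ, hδ, hδ'⟩ := Metric.continuousWithinAt_iff.mp (hψ t₀ ht₀) (ε/2) (by linarith)
    refine ⟨δ, hδ, ?_⟩
    intro t ht hdist
    have ht0 : (0:ℝ) ≤ t := ht
    have ht₀0 : (0:ℝ) ≤ t₀ := ht₀
    rcases le_total t t₀ with htt | htt
    · -- t ≤ t₀
      obtain ⟨s₀, hs₀, hψs₀⟩ := hmem t t₀ ht0 htt
      have hs₀0 : (0:ℝ) ≤ s₀ := le_trans ht0 hs₀.1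
      have hds₀ : dist s₀ t₀ < δ := by
        rw [Real.dist_eq] at hdist ⊢
        rw [abs_sub_lt_iff] at hdist ⊢
        constructor <;> [linarith [hs₀.2, hs₀.1]; linarith [hs₀.1, hdist.2]]
      have h1 := hδ' ht hdist
      have h2 := hδ' hs₀0 hds₀
      rw [Real.dist_eq, abs_sub_lt_iff] at h1 h2
      have hmin : m t₀ = min (m t) (ψ s₀) := by rw [h_split t t₀ ht0 htt, hψs₀]
      have hanti := h_anti t t₀ ht0 htt
      rw [Real.dist_eq, abs_sub_lt_iff]
      constructor
      · rcases le_total (ψ s₀) (m t) with h | h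
        · rw [hmin, min_eq_right h]
          have := h_le t ht0
          linarith [h1.1, h2.2]
        · rw [hmin, min_eq_left h]; linarith
      · linarith
    · -- t₀ ≤ t
      obtain ⟨s₀, hs₀, hψs₀⟩ := hmem t₀ t ht₀0 htt
      have hs₀0 : (0:ℝ) ≤ s₀ := le_trans ht₀0 hs₀.1
      have hds₀ : dist s₀ t₀ < δ := by
        rw [Real.dist_eq] at hdist ⊢
        rw [abs_sub_lt_iff] at hdist ⊢
        constructor <;> [linarith [hs₀.2, hdist.1]; linarith [hs₀.1]]
      have h2 := hδ' hs₀0 hds₀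
      rw [Real.dist_eq, abs_sub_lt_iff] at h2
      have hmin : m t = min (m t₀) (ψ s₀) := by rw [h_split t₀ t ht₀0 htt, hψs₀]
      have hanti := h_anti t₀ t ht₀0 htt
      rw [Real.dist_eq, abs_sub_lt_iff]
      constructor
      · linarith
      · rcases le_total (ψ s₀) (m t₀) with h | h
        · rw [hmin, min_eq_right h]
          have := h_le t₀ ht₀0
          linarith [h2.2]
        · rw [hmin, min_eq_left h]; linarith
  have hx' : ∀ t, x t = ψ t - min 0 (m t) := hx
  have hφ' : ∀ t, φ t = -min 0 (m t) := by
    intro t; rw [hφ, hx' t]; ring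
  have hm0 : m 0 = ψ 0 := by
    show sInf (ψ '' Icc 0 0) = ψ 0
    rw [Icc_self, image_singleton, csInf_singleton]
  refine ⟨?_, ?_, ?_, ?_, ?_⟩
  · -- continuity of x
    have : ContinuousOn (fun t => ψ t - min 0 (m t)) (Ici 0) :=
      hψ.sub ((continuous_const.min continuous_id).comp_continuousOn hmc)
    exact this.congr (fun t _ => hx' t)
  · intro t ht
    rw [hx' t]
    linarith [min_le_right 0 (m t), h_le t ht]
  · intro a ha b hb hab
    rw [hφ' a, hφ' b]
    exact neg_le_neg (min_le_min le_rfl (h_anti a b ha hab))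
  · rw [hφ' 0, hm0, min_eq_left hψ0, neg_zero]
  · intro a b ha hab hpos
    obtain ⟨s₀, hs₀, hψs₀⟩ := hmem a b ha hab
    have hs₀0 : (0:ℝ) ≤ s₀ := le_trans ha hs₀.1
    have hsplit : m b = min (m a) (ψ s₀) := by rw [h_split a b ha hab, hψs₀]
    have hx₀ : 0 < x s₀ := hpos s₀ hs₀
    rw [hx' s₀] at hx₀
    have hkey : min 0 (m a) ≤ ψ s₀ := by
      by_contra h
      push_neg at h
      have hma : ψ s₀ ≤ m a := le_trans h.le (min_le_right 0 (m a))
      have hmb : m b = ψ s₀ := by rw [hsplit, min_eq_right hma]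
      have h0 : min 0 (m b) = ψ s₀ := by
        rw [hmb, min_eq_right (le_trans h.le (min_le_left 0 (m a)))]
      have hmono : min 0 (m b) ≤ min 0 (m s₀) :=
        min_le_min le_rfl (h_anti s₀ b hs₀0 hs₀.2)
      linarith
    rw [hφ' a, hφ' b]
    congr 1
    rw [hsplit, ← min_assoc]
    exact min_eq_left hkey
end

section
/- Let ψ : [0,∞) → ℝ be a continuous function with ψ(0) ≥ 0. Suppose x, φ : [0,∞) → ℝ satisfy: x is continuous, x(t) = ψ(t) + φ(t) for all t ≥ 0, x(t) ≥ 0 for all t ≥ 0, φ is nondecreasing with φ(0) = 0, and for all 0 ≤ a ≤ b, if x(s) > 0 for every s ∈ (a,b) then φ(b) = φ(a). Then x(t) = Γ(ψ)(t) = ψ(t) − min(0, inf_{s∈[0,t]} ψ(s)) and φ(t) = −min(0, inf_{s∈[0,t]} ψ(s)) for all t ≥ 0; in particular the solution of the Skorohod reflection problem associated with ψ is unique. -/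
open Set

/-- Skorohod reflection on ℝ₊: uniqueness.  If `(x, φ)` solves the Skorohod reflection
problem associated with a continuous `ψ : [0,∞) → ℝ` with `ψ 0 ≥ 0` (i.e. `x = ψ + φ ≥ 0`,
`x` continuous, `φ` nondecreasing with `φ 0 = 0` and constant on intervals where `x > 0`),
then `x t = ψ t - min 0 (inf_{s ∈ [0,t]} ψ s)` and `φ t = - min 0 (inf_{s ∈ [0,t]} ψ s)`. -/
theorem skorohod_reflection_uniqueness
    (ψ x φ : ℝ → ℝ) (hψ : ContinuousOn ψ (Ici 0)) (hψ0 : 0 ≤ ψ 0)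
    (hxcont : ContinuousOn x (Ici 0))
    (hxψφ : ∀ t, 0 ≤ t → x t = ψ t + φ t)
    (hxnn : ∀ t, 0 ≤ t → 0 ≤ x t)
    (hφmono : MonotoneOn φ (Ici 0))
    (hφ0 : φ 0 = 0)
    (hflat : ∀ a b, 0 ≤ a → a ≤ b → (∀ s ∈ Ioo a b, 0 < x s) → φ b = φ a) :
    ∀ t, 0 ≤ t →
      x t = ψ t - min 0 (sInf (ψ '' Icc 0 t)) ∧
      φ t = - min 0 (sInf (ψ '' Icc 0 t)) := by
  intro t ht
  have hIcc : Icc (0:ℝ) t ⊆ Ici 0 := fun s hs => hs.1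
  have hSne : (ψ '' Icc 0 t).Nonempty := ⟨ψ 0, mem_image_of_mem _ ⟨le_refl 0, ht⟩⟩
  have hSbdd : BddBelow (ψ '' Icc 0 t) :=
    (isCompact_Icc.image_of_continuousOn (hψ.mono hIcc)).bddBelow
  have hφt0 : 0 ≤ φ t := by
    have := hφmono (self_mem_Ici) (mem_Ici.mpr ht) ht
    linarith [hφ0]
  -- lower bound : φ t ≥ - min 0 (sInf ...)
  have hlow : - min 0 (sInf (ψ '' Icc 0 t)) ≤ φ t := by
    have hinf : -φ t ≤ sInf (ψ '' Icc 0 t) := by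
      apply le_csInf hSne
      rintro y ⟨s, hs, rfl⟩
      have hxs := hxnn s (hs.1)
      have hψs := hxψφ s hs.1
      have hmono := hφmono (mem_Ici.mpr hs.1) (mem_Ici.mpr ht) hs.2
      linarith
    have : -φ t ≤ min 0 (sInf (ψ '' Icc 0 t)) := le_min (by linarith) hinf
    linarith
  -- upper bound
  have hup : φ t ≤ - min 0 (sInf (ψ '' Icc 0 t)) := by
    by_cases hZ : ∃ s ∈ Icc (0:ℝ) t, x s = 0
    · set Z : Set ℝ := Icc 0 t ∩ x ⁻¹' {0} with hZdef
      have hZne : Z.Nonempty := by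
        obtain ⟨s, hs, hxs⟩ := hZ
        exact ⟨s, hs, by simpa using hxs⟩
      have hZclosed : IsClosed Z :=
        (hxcont.mono hIcc).preimage_isClosed_of_isClosed isClosed_Icc isClosed_singleton
      have hZbdd : BddAbove Z := ⟨t, fun s hs => hs.1.2⟩
      set u := sSup Z with hu
      have huZ : u ∈ Z := hZclosed.csSup_mem hZne hZbdd
      obtain ⟨⟨hu0, hut⟩, hxu⟩ := huZ
      have hxu0 : x u = 0 := by simpa using hxu
      have hpos : ∀ s ∈ Ioo u t, 0 < x s := by
        intro s hs
        have hs0 : 0 ≤ s := le_trans hu0 hs.1.le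
        rcases lt_or_eq_of_le (hxnn s hs0) with h | h
        · exact h
        · exfalso
          have : s ∈ Z := ⟨⟨hs0, hs.2.le⟩, by simpa using h.symm⟩
          exact absurd (le_csSup hZbdd this) (not_le.mpr hs.1)
      have hφtu : φ t = φ u := hflat u t hu0 hut hpos
      have hψu : ψ u + φ u = 0 := by
        have := hxψφ u hu0; linarith [hxu0]
      have hinf : sInf (ψ '' Icc 0 t) ≤ ψ u :=
        csInf_le hSbdd (mem_image_of_mem _ ⟨hu0, hut⟩)
      have : min 0 (sInf (ψ '' Icc 0 t)) ≤ ψ u := le_trans (min_le_right _ _) hinf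
      linarith
    · push_neg at hZ
      have hpos : ∀ s ∈ Ioo (0:ℝ) t, 0 < x s := by
        intro s hs
        exact lt_of_le_of_ne (hxnn s hs.1.le) (fun h => hZ s ⟨hs.1.le, hs.2.le⟩ h.symm)
      have := hflat 0 t le_rfl ht hpos
      have hmin : min 0 (sInf (ψ '' Icc 0 t)) ≤ 0 := min_le_left _ _
      linarith [hφ0]
  have hφeq : φ t = - min 0 (sInf (ψ '' Icc 0 t)) := le_antisymm hup hlow
  refine ⟨?_, hφeq⟩
  have := hxψφ t ht
  linarith [hφeq]
end

section
/- Let ψ₁, ψ₂ : [0,∞) → ℝ be continuous functions. Then for every t ≥ 0, sup_{s∈[0,t]} |Γ(ψ₁)(s) − Γ(ψ₂)(s)| ≤ 2 · sup_{s∈[0,t]} |ψ₁(s) − ψ₂(s)|, where Γ(ψ)(t) = ψ(t) − min(0, inf_{s∈[0,t]} ψ(s)). In particular, the Skorohod reflection map Γ is Lipschitz continuous with constant 2 for the locally uniform metric. -/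
open Set

lemma abs_min_zero_sub_min_zero_le (a b : ℝ) : |min 0 a - min 0 b| ≤ |a - b| := by
  rcases abs_cases (a - b) with ⟨h, h'⟩ <;> rcases le_total a 0 with ha | ha <;>
    rcases le_total b 0 with hb | hb <;> rw [abs_le] <;>
    constructor <;> simp [min_eq_left, min_eq_right, *] <;> linarith

/-- Lipschitz continuity (with constant 2) of the Skorohod reflection map
`Γ(ψ)(t) = ψ t - min 0 (inf_{s ∈ [0,t]} ψ s)` for the locally uniform metric:
for continuous `ψ₁, ψ₂ : [0,∞) → ℝ` and every `t ≥ 0`,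
`sup_{s ∈ [0,t]} |Γ(ψ₁)(s) - Γ(ψ₂)(s)| ≤ 2 sup_{s ∈ [0,t]} |ψ₁ s - ψ₂ s|`. -/
theorem skorohod_map_lipschitz
    (ψ₁ ψ₂ : ℝ → ℝ)
    (h₁ : ContinuousOn ψ₁ (Ici 0)) (h₂ : ContinuousOn ψ₂ (Ici 0)) :
    ∀ t, 0 ≤ t →
      sSup ((fun s => |(ψ₁ s - min 0 (sInf (ψ₁ '' Icc 0 s))) -
                       (ψ₂ s - min 0 (sInf (ψ₂ '' Icc 0 s)))|) '' Icc 0 t)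
        ≤ 2 * sSup ((fun s => |ψ₁ s - ψ₂ s|) '' Icc 0 t) := by
  intro t ht
  set M := sSup ((fun s => |ψ₁ s - ψ₂ s|) '' Icc 0 t) with hM
  have hsubI : Icc (0:ℝ) t ⊆ Ici 0 := fun x hx => hx.1
  have hbddM : BddAbove ((fun s => |ψ₁ s - ψ₂ s|) '' Icc 0 t) :=
    (isCompact_Icc.image_of_continuousOn
      (((h₁.mono hsubI).sub (h₂.mono hsubI)).abs)).bddAbove
  have hMle : ∀ s ∈ Icc (0:ℝ) t, |ψ₁ s - ψ₂ s| ≤ M :=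
    fun s hs => le_csSup hbddM (mem_image_of_mem _ hs)
  apply csSup_le ((nonempty_Icc.mpr ht).image _)
  rintro x ⟨s, hs, rfl⟩
  -- key estimate about the infima
  have hsub : Icc (0:ℝ) s ⊆ Ici 0 := fun x hx => hx.1
  have hsub' : Icc (0:ℝ) s ⊆ Icc 0 t := Icc_subset_Icc le_rfl hs.2
  have hne : (Icc (0:ℝ) s).Nonempty := nonempty_Icc.mpr hs.1
  have hb₁ : BddBelow (ψ₁ '' Icc 0 s) :=
    (isCompact_Icc.image_of_continuousOn (h₁.mono hsub)).bddBelow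
  have hb₂ : BddBelow (ψ₂ '' Icc 0 s) :=
    (isCompact_Icc.image_of_continuousOn (h₂.mono hsub)).bddBelow
  have key : ∀ (f g : ℝ → ℝ), BddBelow (f '' Icc 0 s) →
      (∀ u ∈ Icc (0:ℝ) s, f u - g u ≤ M) →
      sInf (f '' Icc 0 s) ≤ sInf (g '' Icc 0 s) + M := by
    intro f g hbf hfg
    rw [← sub_le_iff_le_add]
    apply le_csInf (hne.image g)
    rintro b ⟨u, hu, rfl⟩
    have := csInf_le hbf (mem_image_of_mem f hu)
    have := hfg u hu
    linarith
  have h12 : ∀ u ∈ Icc (0:ℝ) s, ψ₁ u - ψ₂ u ≤ M := fun u hu =>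
    le_trans (le_abs_self _) (hMle u (hsub' hu))
  have h21 : ∀ u ∈ Icc (0:ℝ) s, ψ₂ u - ψ₁ u ≤ M := fun u hu =>
    le_trans (by rw [abs_sub_comm]; exact le_abs_self _) (hMle u (hsub' hu))
  have hinf : |sInf (ψ₁ '' Icc 0 s) - sInf (ψ₂ '' Icc 0 s)| ≤ M := by
    rw [abs_sub_le_iff]
    constructor <;> [skip; skip]
    · have := key ψ₁ ψ₂ hb₁ h12; linarith
    · have := key ψ₂ ψ₁ hb₂ h21; linarith
  have hmin := abs_min_zero_sub_min_zero_le (sInf (ψ₁ '' Icc 0 s)) (sInf (ψ₂ '' Icc 0 s))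
  have habs : |(ψ₁ s - min 0 (sInf (ψ₁ '' Icc 0 s))) -
      (ψ₂ s - min 0 (sInf (ψ₂ '' Icc 0 s)))| ≤
      |ψ₁ s - ψ₂ s| + |min 0 (sInf (ψ₁ '' Icc 0 s)) - min 0 (sInf (ψ₂ '' Icc 0 s))| := by
    have := abs_sub (ψ₁ s - ψ₂ s) (min 0 (sInf (ψ₁ '' Icc 0 s)) - min 0 (sInf (ψ₂ '' Icc 0 s)))
    calc _ = |(ψ₁ s - ψ₂ s) - (min 0 (sInf (ψ₁ '' Icc 0 s)) - min 0 (sInf (ψ₂ '' Icc 0 s)))| := by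
            ring_nf
      _ ≤ _ := abs_sub _ _
  have h1 := hMle s hs
  linarith
end

section
/- Suppose ψ₁, ψ₂ : [0,∞) → ℝ are right-continuous functions with left-hand limits that are bounded on every compact interval, with ψ₁(0) ≥ ψ₂(0) ≥ 0. If ψ₁ strongly majorises ψ₂, i.e. the function t ↦ ψ₁(t) − ψ₂(t) is nondecreasing on [0,∞), then Γ(ψ₁)(t) ≥ Γ(ψ₂)(t) for all t ≥ 0, where Γ(ψ)(t) = ψ(t) − min(0, inf_{s∈[0,t]} ψ(s)). -/
open Set Filter

/-- Majorisation property of the Skorohod reflection map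
`Γ(ψ)(t) = ψ t - min 0 (inf_{s ∈ [0,t]} ψ s)`: if `ψ₁, ψ₂ : [0,∞) → ℝ` are
right-continuous with left-hand limits, bounded on compact intervals, satisfy
`ψ₁ 0 ≥ ψ₂ 0 ≥ 0`, and `ψ₁` strongly majorises `ψ₂` (i.e. `ψ₁ - ψ₂` is
nondecreasing on `[0,∞)`), then `Γ(ψ₁)(t) ≥ Γ(ψ₂)(t)` for all `t ≥ 0`. -/
theorem skorohod_map_majorisation
    (ψ₁ ψ₂ : ℝ → ℝ)
    (h₁rc : ∀ t, 0 ≤ t → ContinuousWithinAt ψ₁ (Ici t) t)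
    (h₂rc : ∀ t, 0 ≤ t → ContinuousWithinAt ψ₂ (Ici t) t)
    (h₁ll : ∀ t, 0 < t → ∃ L, Tendsto ψ₁ (nhdsWithin t (Iio t)) (nhds L))
    (h₂ll : ∀ t, 0 < t → ∃ L, Tendsto ψ₂ (nhdsWithin t (Iio t)) (nhds L))
    (h₁bd : ∀ t, 0 ≤ t → BddBelow (ψ₁ '' Icc 0 t) ∧ BddAbove (ψ₁ '' Icc 0 t))
    (h₂bd : ∀ t, 0 ≤ t → BddBelow (ψ₂ '' Icc 0 t) ∧ BddAbove (ψ₂ '' Icc 0 t))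
    (h0 : ψ₂ 0 ≤ ψ₁ 0) (h0' : 0 ≤ ψ₂ 0)
    (hmaj : MonotoneOn (fun t => ψ₁ t - ψ₂ t) (Ici 0)) :
    ∀ t, 0 ≤ t →
      ψ₂ t - min 0 (sInf (ψ₂ '' Icc 0 t)) ≤ ψ₁ t - min 0 (sInf (ψ₁ '' Icc 0 t)) := by
  intro t ht
  set D := ψ₁ t - ψ₂ t with hD
  have hD0 : 0 ≤ D := by
    have := hmaj self_mem_Ici (mem_Ici.mpr ht) ht
    simp only at this
    linarith
  have hne : (ψ₁ '' Icc 0 t).Nonempty := ⟨ψ₁ 0, ⟨0, ⟨le_rfl, ht⟩, rfl⟩⟩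
  have hbd1 := (h₁bd t ht).1
  have hkey : sInf (ψ₁ '' Icc 0 t) - D ≤ sInf (ψ₂ '' Icc 0 t) := by
    apply le_csInf (⟨ψ₂ 0, ⟨0, ⟨le_rfl, ht⟩, rfl⟩⟩ : (ψ₂ '' Icc 0 t).Nonempty)
    rintro y ⟨s, hs, rfl⟩
    have h1 : sInf (ψ₁ '' Icc 0 t) ≤ ψ₁ s := csInf_le hbd1 ⟨s, hs, rfl⟩
    have h2 : ψ₁ s - ψ₂ s ≤ D := hmaj (mem_Ici.mpr hs.1) (mem_Ici.mpr ht) hs.2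
    linarith
  have : min 0 (sInf (ψ₁ '' Icc 0 t)) ≤ D + min 0 (sInf (ψ₂ '' Icc 0 t)) := by
    rcases le_total (0:ℝ) (sInf (ψ₁ '' Icc 0 t)) with h | h
    · rcases le_total (0:ℝ) (sInf (ψ₂ '' Icc 0 t)) with h' | h' <;>
        simp_all <;> linarith
    · rcases le_total (0:ℝ) (sInf (ψ₂ '' Icc 0 t)) with h' | h' <;>
        simp_all <;> linarith
  linarith
end

section
/- Let G = (V,E) be a finite simple undirected graph with nonempty vertex set V and adjacency matrix A, let ν(G) be the largest eigenvalue of A, and let α, β ∈ ℝ satisfy α < 0 and α + β ν(G) < 0. Let (N_n)_{n∈ℕ} be positive integers with N_n/√n → ∞ and N_n/n → 0 as n → ∞. For each n define the finite grid S^n = {k/√n : k = 0, 1, …, N_n}^V ⊂ ℝ^V, the function W_n(x) = (α/2) Σ_{v∈V} x_v² + β Σ_{{u,v}∈E} x_u x_v − (α/(2√n)) Σ_{v∈V} x_v, and U(x) = (α/2) Σ_{v∈V} x_v² + β Σ_{{u,v}∈E} x_u x_v. Then for every bounded continuous function f : ℝ^V → ℝ, n^{−|V|/2} Σ_{x∈S^n}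 f(x) e^{W_n(x)} → ∫_{[0,∞)^V} f(x) e^{U(x)} dx as n → ∞, where the integral is with respect to Lebesgue measure on the nonnegative orthant and is finite. -/
open Finset MeasureTheory Filter

/-- `U(x) = (α/2) Σ_v x_v² + β Σ_{{u,v} ∈ E} x_u x_v`, with the edge sum written as half
of the double sum over ordered adjacent pairs. -/
noncomputable def Ufun {V : Type*} [Fintype V] (G : SimpleGraph V) [DecidableRel G.Adj]
    (α β : ℝ) (x : V → ℝ) : ℝ :=
  α / 2 * ∑ v, x v ^ 2 + β * (∑ v, ∑ u, if G.Adj v u then x v * x u else 0) / 2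

/-- `W_n(x) = U(x) - (α/(2√n)) Σ_v x_v`. -/
noncomputable def Wn {V : Type*} [Fintype V] (G : SimpleGraph V) [DecidableRel G.Adj]
    (α β : ℝ) (n : ℕ) (x : V → ℝ) : ℝ :=
  Ufun G α β x - α / (2 * Real.sqrt n) * ∑ v, x v

section Aux

open Matrix

set_option linter.unusedSectionVars false

variable {V : Type*} [Fintype V] [DecidableEq V]

theorem rayleigh_bound' [Nonempty V]
    {A : Matrix V V ℝ} (hA : A.IsHermitian) (x : V → ℝ) :
    dotProduct x (A.mulVec x) ≤ (⨆ i, hA.eigenvalues i) * ∑ v, x v ^ 2 := by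
  classical
  set U : Matrix V V ℝ := (hA.eigenvectorUnitary : Matrix V V ℝ) with hU
  have hstar : star U = Uᵀ := by
    rw [Matrix.star_eq_conjTranspose, Matrix.conjTranspose_eq_transpose_of_trivial]
  have hUU : U * Uᵀ = 1 := by
    rw [← hstar]; exact (Matrix.mem_unitaryGroup_iff).mp hA.eigenvectorUnitary.2
  set y : V → ℝ := Matrix.mulVec Uᵀ x with hy
  have hyvm : y = Matrix.vecMul x U := by rw [hy, Matrix.mulVec_transpose]
  have hyy : dotProduct y y = ∑ v, x v ^ 2 := by
    rw [hy]; nth_rewrite 1 [Matrix.mulVec_transpose]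
    rw [dotProduct_mulVec, Matrix.vecMul_vecMul, hUU, Matrix.vecMul_one]
    simp [dotProduct, sq]
  have hdiag : dotProduct x (A.mulVec x) = ∑ i, hA.eigenvalues i * y i ^ 2 := by
    conv_lhs => rw [hA.spectral_theorem, Unitary.conjStarAlgAut_apply]
    rw [← hU, hstar, ← Matrix.mulVec_mulVec, ← Matrix.mulVec_mulVec,
      dotProduct_mulVec, ← hyvm, ← hy]
    simp only [dotProduct, Matrix.mulVec_diagonal, Function.comp_apply,
      RCLike.ofReal_real_eq_id, id_eq]
    exact Finset.sum_congr rfl fun i _ => by ring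
  rw [hdiag, ← hyy]
  have hsum : dotProduct y y = ∑ i, y i ^ 2 := by simp [dotProduct, sq]
  rw [hsum, Finset.mul_sum]
  apply Finset.sum_le_sum
  intro i _
  exact mul_le_mul_of_nonneg_right (le_ciSup (Set.finite_range _).bddAbove i) (sq_nonneg _)

theorem Ufun_le' [Nonempty V]
    (G : SimpleGraph V) [DecidableRel G.Adj] (α β : ℝ)
    (hA : (G.adjMatrix ℝ).IsHermitian) (x : V → ℝ) (hx : ∀ v, 0 ≤ x v) :
    Ufun G α β x ≤ (max α (α + β * (⨆ i, hA.eigenvalues i)) / 2) * ∑ v, x v ^ 2 := by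
  unfold Ufun
  set ν := ⨆ i, hA.eigenvalues i with hν
  have hsq : (0:ℝ) ≤ ∑ v, x v ^ 2 := Finset.sum_nonneg fun v _ => sq_nonneg _
  have hS : (∑ v, ∑ u, if G.Adj v u then x v * x u else 0)
      = dotProduct x ((G.adjMatrix ℝ).mulVec x) := by
    simp only [dotProduct, Matrix.mulVec, SimpleGraph.adjMatrix_apply, Finset.mul_sum]
    refine Finset.sum_congr rfl fun v _ => Finset.sum_congr rfl fun u _ => ?_
    by_cases h : G.Adj v u <;> simp [h, dotProduct]
  rcases le_or_gt 0 β with hβ | hβ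
  · have h1 : β * (∑ v, ∑ u, if G.Adj v u then x v * x u else 0) ≤ β * (ν * ∑ v, x v ^ 2) := by
      rw [hS]; exact mul_le_mul_of_nonneg_left (rayleigh_bound' hA x) hβ
    have h3 : α / 2 * ∑ v, x v ^ 2 + β * (∑ v, ∑ u, if G.Adj v u then x v * x u else 0) / 2
        ≤ ((α + β * ν) / 2) * ∑ v, x v ^ 2 := by nlinarith [h1]
    refine h3.trans ?_
    gcongr
    · exact le_max_right _ _
  · have hS0 : (0:ℝ) ≤ ∑ v, ∑ u, if G.Adj v u then x v * x u else 0 :=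
      Finset.sum_nonneg fun v _ => Finset.sum_nonneg fun u _ => by
        by_cases h : G.Adj v u <;> simp [h, mul_nonneg (hx v) (hx u)]
    have h2 : β * (∑ v, ∑ u, if G.Adj v u then x v * x u else 0) / 2 ≤ 0 :=
      div_nonpos_of_nonpos_of_nonneg (mul_nonpos_of_nonpos_of_nonneg hβ.le hS0) two_pos.le
    calc α / 2 * ∑ v, x v ^ 2 + β * (∑ v, ∑ u, if G.Adj v u then x v * x u else 0) / 2
        ≤ α / 2 * ∑ v, x v ^ 2 + 0 := by linarith
      _ = (α/2) * ∑ v, x v ^ 2 := by ring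
      _ ≤ (max α (α + β * ν) / 2) * ∑ v, x v ^ 2 := by
          gcongr
          · exact le_max_left _ _

theorem Ufun_continuous (G : SimpleGraph V) [DecidableRel G.Adj] (α β : ℝ) :
    Continuous (Ufun G α β) := by
  have h1 : Continuous fun x : V → ℝ => ∑ v, x v ^ 2 :=
    continuous_finset_sum _ fun v _ => (continuous_apply v).pow 2
  have h2 : Continuous fun x : V → ℝ => ∑ v, ∑ u, if G.Adj v u then x v * x u else 0 := by
    refine continuous_finset_sum _ fun v _ => continuous_finset_sum _ fun u _ => ?_
    by_cases h : G.Adj v u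
    · simp only [h, if_true]; exact (continuous_apply v).mul (continuous_apply u)
    · simpa [h] using continuous_const
  unfold Ufun
  exact (continuous_const.mul h1).add ((continuous_const.mul h2).div_const 2)

/-- The half-open grid cell with lower corner `k/s`. -/
def gridCell (M : ℕ) (s : ℝ) (k : V → Fin (M + 1)) : Set (V → ℝ) :=
  Set.univ.pi fun v => Set.Ico (((k v : ℕ) : ℝ) / s) ((((k v : ℕ) : ℝ) + 1) / s)

lemma mem_gridCell_iff {M : ℕ} {s : ℝ} (hs : 0 < s) {k : V → Fin (M + 1)} {x : V → ℝ} :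
    x ∈ gridCell M s k ↔ ∀ v, ((k v : ℕ) : ℝ) ≤ x v * s ∧ x v * s < ((k v : ℕ) : ℝ) + 1 := by
  simp only [gridCell, Set.mem_pi, Set.mem_univ, forall_true_left, Set.mem_Ico]
  refine forall_congr' fun v => ?_
  rw [div_le_iff₀ hs, lt_div_iff₀ hs]

lemma gridCell_unique {M : ℕ} {s : ℝ} (hs : 0 < s) {k k' : V → Fin (M + 1)} {x : V → ℝ}
    (h : x ∈ gridCell M s k) (h' : x ∈ gridCell M s k') : k = k' := by
  funext v
  have h1 := (mem_gridCell_iff hs).mp h v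
  have h2 := (mem_gridCell_iff hs).mp h' v
  have : (k v : ℕ) = (k' v : ℕ) := by
    have a1 : ((k v : ℕ) : ℝ) < ((k' v : ℕ) : ℝ) + 1 := lt_of_le_of_lt h1.1 h2.2
    have a2 : ((k' v : ℕ) : ℝ) < ((k v : ℕ) : ℝ) + 1 := lt_of_le_of_lt h2.1 h1.2
    have b1 : (k v : ℕ) < (k' v : ℕ) + 1 := by exact_mod_cast a1
    have b2 : (k' v : ℕ) < (k v : ℕ) + 1 := by exact_mod_cast a2
    omega
  exact Fin.ext this

lemma measurableSet_gridCell {M : ℕ} {s : ℝ} (k : V → Fin (M + 1)) :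
    MeasurableSet (gridCell M s k : Set (V → ℝ)) :=
  MeasurableSet.univ_pi fun _ => measurableSet_Ico

lemma volume_gridCell {M : ℕ} {s : ℝ} (hs : 0 < s) (k : V → Fin (M + 1)) :
    volume (gridCell M s k : Set (V → ℝ)) = ENNReal.ofReal s⁻¹ ^ Fintype.card V := by
  rw [gridCell, volume_pi_pi]
  have : ∀ v, volume (Set.Ico (((k v : ℕ) : ℝ) / s) ((((k v : ℕ) : ℝ) + 1) / s))
      = ENNReal.ofReal s⁻¹ := by
    intro v
    rw [Real.volume_Ico]
    congr 1
    field_simp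
    ring
  simp only [this, Finset.prod_const, Finset.card_univ]

lemma integral_gridSum {M : ℕ} {s : ℝ} (hs : 0 < s) (a : (V → Fin (M + 1)) → ℝ) :
    ∫ x : V → ℝ, (∑ k : V → Fin (M + 1), (gridCell M s k).indicator (fun _ => a k) x)
      = (s⁻¹) ^ Fintype.card V * ∑ k : V → Fin (M + 1), a k := by
  rw [MeasureTheory.integral_finset_sum]
  · have : ∀ k : V → Fin (M + 1),
        (∫ x : V → ℝ, (gridCell M s k).indicator (fun _ => a k) x)
          = (s⁻¹) ^ Fintype.card V * a k := by
      intro k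
      rw [MeasureTheory.integral_indicator_const _ (measurableSet_gridCell k),
        measureReal_def, volume_gridCell hs k]
      rw [smul_eq_mul, ENNReal.toReal_pow, ENNReal.toReal_ofReal (inv_nonneg.mpr hs.le)]
    simp only [this, ← Finset.mul_sum]
  · intro k _
    rw [integrable_indicator_iff (measurableSet_gridCell k)]
    apply (integrableOn_const_iff (C := a k)).mpr
    right
    rw [volume_gridCell hs k]
    exact ENNReal.pow_lt_top ENNReal.ofReal_lt_top

lemma sum_indicator_gridCell_eq {M : ℕ} {s : ℝ} (hs : 0 < s) {k : V → Fin (M + 1)} {x : V → ℝ}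
    (hx : x ∈ gridCell M s k) (a : (V → Fin (M + 1)) → ℝ) :
    (∑ k' : V → Fin (M + 1), (gridCell M s k').indicator (fun _ => a k') x) = a k := by
  rw [Finset.sum_eq_single_of_mem k (Finset.mem_univ k)]
  · exact Set.indicator_of_mem hx _
  · intro k' _ hne
    apply Set.indicator_of_notMem
    intro hx'
    exact hne (gridCell_unique hs hx' hx)

lemma aux_sq {x y : ℝ} (hy : 0 ≤ y) (h1 : y ≤ x) (h2 : x < y + 1) : (x - 1) ^ 2 ≤ 1 + y ^ 2 := by
  nlinarith [sq_nonneg (x - y), mul_nonneg hy (sub_nonneg.mpr h1)]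

lemma sqrt_nat_tendsto : Tendsto (fun n : ℕ => Real.sqrt n) atTop atTop := by
  apply tendsto_atTop_atTop.mpr
  intro b
  refine ⟨Nat.ceil (b ^ 2 ⊔ 0), fun a ha => ?_⟩
  have h1 : (b ^ 2 ⊔ 0 : ℝ) ≤ a := le_trans (Nat.le_ceil _) (by exact_mod_cast ha)
  calc b ≤ |b| := le_abs_self b
    _ = Real.sqrt (b ^ 2) := (Real.sqrt_sq_eq_abs b).symm
    _ ≤ Real.sqrt a := Real.sqrt_le_sqrt (le_trans (le_max_left _ _) h1)

lemma inv_sqrt_tendsto : Tendsto (fun n : ℕ => (Real.sqrt n)⁻¹) atTop (nhds 0) :=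
  sqrt_nat_tendsto.inv_tendsto_atTop

lemma rpow_half_inv (n : ℕ) (d : ℕ) : (((n:ℝ)) ^ ((d:ℝ)/2))⁻¹ = ((Real.sqrt n)⁻¹) ^ d := by
  rw [Real.sqrt_eq_rpow, inv_pow, ← Real.rpow_natCast ((n:ℝ) ^ (1/2:ℝ)) d,
    ← Real.rpow_mul (Nat.cast_nonneg n)]
  norm_num
  ring_nf

end Aux

/-- Riemann-sum convergence: under `α < 0`, `α + β ν(G) < 0`, `N_n/√n → ∞` and
`N_n/n → 0`, for every bounded continuous `f : ℝ^V → ℝ`, the function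
`x ↦ f(x) e^{U(x)}` is integrable over the nonnegative orthant and
`n^{-|V|/2} Σ_{x ∈ Sⁿ} f(x) e^{W_n(x)} → ∫_{[0,∞)^V} f(x) e^{U(x)} dx`, where
`Sⁿ = {k/√n : k = 0,…,N_n}^V` (grid points encoded by `k : V → Fin (N_n + 1)`). -/
theorem riemann_sum_convergence {V : Type*} [Fintype V] [DecidableEq V] [Nonempty V]
    (G : SimpleGraph V) [DecidableRel G.Adj] (α β : ℝ)
    (hA : (G.adjMatrix ℝ).IsHermitian)
    (hα : α < 0) (hcrit : α + β * (⨆ i, hA.eigenvalues i) < 0)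
    (N : ℕ → ℕ) (hNpos : ∀ n, 0 < N n)
    (hN1 : Tendsto (fun n => (N n : ℝ) / Real.sqrt n) atTop atTop)
    (hN2 : Tendsto (fun n => (N n : ℝ) / n) atTop (nhds 0))
    (f : (V → ℝ) → ℝ) (hf : Continuous f) (hfb : ∃ C, ∀ x, |f x| ≤ C) :
    IntegrableOn (fun x => f x * Real.exp (Ufun G α β x)) {x | ∀ v, 0 ≤ x v} volume ∧
    Tendsto
      (fun n : ℕ => ((n : ℝ) ^ ((Fintype.card V : ℝ) / 2))⁻¹ *
        ∑ k : V → Fin (N n + 1),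
          f (fun v => ((k v : ℕ) : ℝ) / Real.sqrt n) *
            Real.exp (Wn G α β n fun v => ((k v : ℕ) : ℝ) / Real.sqrt n))
      atTop
      (nhds (∫ x in {x : V → ℝ | ∀ v, 0 ≤ x v}, f x * Real.exp (Ufun G α β x))) := by
  classical
  obtain ⟨C, hC⟩ := hfb
  set c : ℝ := -(max α (α + β * (⨆ i, hA.eigenvalues i)) / 2) with hcdef
  have hm0 : max α (α + β * (⨆ i, hA.eigenvalues i)) < 0 := max_lt hα hcrit
  have hc : 0 < c := by rw [hcdef]; linarith
  set C0 : ℝ := max C 0 with hC0def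
  have hC0' : ∀ x, |f x| ≤ C0 := fun x => (hC x).trans (le_max_left _ _)
  have hC0nn : 0 ≤ C0 := le_max_right _ _
  clear_value C0
  have hSmeas : MeasurableSet {x : V → ℝ | ∀ v, 0 ≤ x v} := by
    have hS : {x : V → ℝ | ∀ v, 0 ≤ x v} = Set.univ.pi fun _ : V => Set.Ici (0:ℝ) := by
      ext x
      simp only [Set.mem_setOf_eq, Set.mem_pi, Set.mem_univ, forall_true_left, Set.mem_Ici]
    rw [hS]; exact MeasurableSet.univ_pi fun _ => measurableSet_Ici
  have hUcont := Ufun_continuous G α β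
  have hUle : ∀ x : V → ℝ, (∀ v, 0 ≤ x v) → Ufun G α β x ≤ -c * ∑ v, x v ^ 2 := by
    intro x hx
    refine (Ufun_le' G α β hA x hx).trans_eq ?_
    rw [hcdef]; ring
  clear_value c
  -- integrability
  have hgauss : Integrable (fun t : ℝ => Real.exp (-c * t ^ 2)) := integrable_exp_neg_mul_sq hc
  have hprod_int : Integrable (fun x : V → ℝ => C0 * ∏ v, Real.exp (-c * (x v) ^ 2)) :=
    (Integrable.fintype_prod (f := fun _ : V => fun t : ℝ => Real.exp (-c * t ^ 2))
      fun _ => hgauss).const_mul C0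
  have hint : IntegrableOn (fun x => f x * Real.exp (Ufun G α β x)) {x | ∀ v, 0 ≤ x v} volume := by
    have hmeas : AEStronglyMeasurable (fun x => f x * Real.exp (Ufun G α β x))
        (volume.restrict {x : V → ℝ | ∀ v, 0 ≤ x v}) :=
      (hf.mul (Real.continuous_exp.comp hUcont)).aestronglyMeasurable
    refine Integrable.mono hprod_int.integrableOn hmeas ?_
    rw [MeasureTheory.ae_restrict_iff' hSmeas]
    refine Filter.Eventually.of_forall fun x hx => ?_
    have h1 : Real.exp (Ufun G α β x) ≤ ∏ v, Real.exp (-c * (x v) ^ 2) := by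
      rw [← Real.exp_sum]
      apply Real.exp_le_exp.mpr
      refine (hUle x hx).trans_eq ?_
      rw [Finset.mul_sum]
    calc ‖f x * Real.exp (Ufun G α β x)‖ = |f x| * Real.exp (Ufun G α β x) := by
          rw [norm_mul, Real.norm_eq_abs, Real.norm_eq_abs, Real.abs_exp]
      _ ≤ C0 * ∏ v, Real.exp (-c * (x v) ^ 2) :=
          mul_le_mul (hC0' x) h1 (Real.exp_pos _).le hC0nn
      _ ≤ ‖C0 * ∏ v, Real.exp (-c * (x v) ^ 2)‖ := le_abs_self _
  refine ⟨hint, ?_⟩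
  -- the step functions
  set F : ℕ → (V → ℝ) → ℝ := fun n x =>
    ∑ k : V → Fin (N n + 1), (gridCell (N n) (Real.sqrt n) k).indicator
      (fun _ => f (fun v => ((k v : ℕ) : ℝ) / Real.sqrt n) *
        Real.exp (Wn G α β n fun v => ((k v : ℕ) : ℝ) / Real.sqrt n)) x with hFdef
  set bound : (V → ℝ) → ℝ := fun x =>
    C0 * Real.exp 1 * ∏ v, (Real.exp c * Real.exp (-c * (x v - 1) ^ 2)) with hbdef
  have hbound_int : Integrable bound := by
    rw [hbdef]
    refine Integrable.const_mul ?_ _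
    exact Integrable.fintype_prod
      (f := fun _ : V => fun t : ℝ => Real.exp c * Real.exp (-c * (t - 1) ^ 2))
      fun _ => (hgauss.comp_sub_right 1).const_mul _
  have hE1 : ∀ᶠ n : ℕ in atTop, (1:ℝ) ≤ Real.sqrt n := by
    filter_upwards [eventually_ge_atTop 1] with n hn
    rw [show (1:ℝ) = Real.sqrt 1 by simp]
    exact Real.sqrt_le_sqrt (by exact_mod_cast hn)
  have hE2 : ∀ᶠ n : ℕ in atTop,
      (-α/2) * (Fintype.card V : ℝ) * ((N n : ℝ)/(n:ℝ)) ≤ 1 := by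
    have h := hN2.const_mul ((-α/2) * (Fintype.card V : ℝ))
    rw [mul_zero] at h
    have := h.eventually (eventually_le_nhds one_pos)
    filter_upwards [this] with n hn
    calc (-α/2) * (Fintype.card V : ℝ) * ((N n : ℝ)/(n:ℝ))
        = (-α/2) * (Fintype.card V : ℝ) * ((N n : ℝ)/(n:ℝ)) := rfl
      _ ≤ 1 := by
          have : (-α/2) * (Fintype.card V : ℝ) * ((N n : ℝ)/(n:ℝ))
              = (-α/2 * (Fintype.card V : ℝ)) * ((N n : ℝ)/(n:ℝ)) := by ring
          rw [this]; exact hn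
  have hFmeas : ∀ n : ℕ, AEStronglyMeasurable (F n) volume := by
    intro n
    apply Measurable.aestronglyMeasurable
    rw [hFdef]
    exact Finset.measurable_sum _ fun k _ =>
      measurable_const.indicator (measurableSet_gridCell k)
  -- domination
  have h_bound : ∀ᶠ n in atTop, ∀ᵐ x : V → ℝ, ‖F n x‖ ≤ bound x := by
    filter_upwards [hE1, hE2] with n h1 h2
    refine Filter.Eventually.of_forall fun x => ?_
    have hs : 0 < Real.sqrt n := lt_of_lt_of_le one_pos h1
    by_cases hx : ∃ k : V → Fin (N n + 1), x ∈ gridCell (N n) (Real.sqrt n) k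
    · obtain ⟨k, hk⟩ := hx
      have hFx : F n x = f (fun v => ((k v : ℕ) : ℝ) / Real.sqrt n) *
          Real.exp (Wn G α β n fun v => ((k v : ℕ) : ℝ) / Real.sqrt n) := by
        rw [hFdef]
        exact sum_indicator_gridCell_eq hs hk _
      rw [hFx]
      set y : V → ℝ := fun v => ((k v : ℕ) : ℝ) / Real.sqrt n with hy
      have hy0 : ∀ v, 0 ≤ y v := fun v => div_nonneg (Nat.cast_nonneg _) hs.le
      have hcorr : -(α / (2 * Real.sqrt n)) * ∑ v, y v ≤ 1 := by
        have hyle : ∀ v, y v ≤ (N n : ℝ)/Real.sqrt n := by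
          intro v
          show ((k v : ℕ) : ℝ) / Real.sqrt n ≤ (N n : ℝ) / Real.sqrt n
          gcongr
          exact_mod_cast Fin.is_le (k v)
        have hsum : ∑ v, y v ≤ (Fintype.card V : ℝ) * ((N n : ℝ)/Real.sqrt n) := by
          calc ∑ v, y v ≤ ∑ _v : V, (N n : ℝ)/Real.sqrt n :=
                Finset.sum_le_sum fun v _ => hyle v
            _ = (Fintype.card V : ℝ) * ((N n : ℝ)/Real.sqrt n) := by
                rw [Finset.sum_const, Finset.card_univ, nsmul_eq_mul]
        have hpos : 0 ≤ -(α / (2 * Real.sqrt n)) := by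
          apply neg_nonneg.mpr
          apply div_nonpos_of_nonpos_of_nonneg hα.le
          positivity
        calc -(α / (2 * Real.sqrt n)) * ∑ v, y v
            ≤ -(α / (2 * Real.sqrt n)) * ((Fintype.card V : ℝ) * ((N n : ℝ)/Real.sqrt n)) :=
              mul_le_mul_of_nonneg_left hsum hpos
          _ = (-α/2) * (Fintype.card V : ℝ) * ((N n : ℝ)/(Real.sqrt n * Real.sqrt n)) := by
              ring
          _ = (-α/2) * (Fintype.card V : ℝ) * ((N n : ℝ)/(n:ℝ)) := by
              rw [Real.mul_self_sqrt (Nat.cast_nonneg n)]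
          _ ≤ 1 := h2
      have hWle : Wn G α β n y ≤ -c * ∑ v, y v ^ 2 + 1 := by
        have hU := hUle y hy0
        have : Wn G α β n y = Ufun G α β y + (-(α / (2 * Real.sqrt n)) * ∑ v, y v) := by
          rw [Wn]; ring
        rw [this]
        linarith [hcorr]
      have hxv : ∀ v, y v ≤ x v ∧ x v < y v + 1 := by
        intro v
        have hmv := (mem_gridCell_iff hs).mp hk v
        constructor
        · show ((k v : ℕ) : ℝ) / Real.sqrt n ≤ x v
          rw [div_le_iff₀ hs]; exact hmv.1
        · have hlt : x v < (((k v : ℕ) : ℝ) + 1) / Real.sqrt n := by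
            rw [lt_div_iff₀ hs]; exact hmv.2
          refine hlt.trans_le ?_
          show (((k v : ℕ) : ℝ) + 1) / Real.sqrt n ≤ ((k v : ℕ) : ℝ) / Real.sqrt n + 1
          rw [add_div]
          gcongr
          rw [div_le_one hs]
          exact h1
      have hterm : ∀ v, Real.exp (-c * (y v) ^ 2)
          ≤ Real.exp c * Real.exp (-c * (x v - 1) ^ 2) := by
        intro v
        rw [← Real.exp_add]
        apply Real.exp_le_exp.mpr
        have hsq := aux_sq (hy0 v) (hxv v).1 (hxv v).2
        nlinarith [mul_le_mul_of_nonneg_left hsq hc.le]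
      calc ‖f y * Real.exp (Wn G α β n y)‖
          = |f y| * Real.exp (Wn G α β n y) := by
            rw [norm_mul, Real.norm_eq_abs, Real.norm_eq_abs, Real.abs_exp]
        _ ≤ C0 * Real.exp (-c * ∑ v, y v ^ 2 + 1) := by
            apply mul_le_mul (hC0' y) (Real.exp_le_exp.mpr hWle) (Real.exp_pos _).le hC0nn
        _ = C0 * Real.exp 1 * ∏ v, Real.exp (-c * y v ^ 2) := by
            rw [← Real.exp_sum, Finset.mul_sum, Real.exp_add]
            ring
        _ ≤ C0 * Real.exp 1 * ∏ v, (Real.exp c * Real.exp (-c * (x v - 1) ^ 2)) := by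
            apply mul_le_mul_of_nonneg_left _ (by positivity)
            exact Finset.prod_le_prod (fun v _ => (Real.exp_pos _).le) fun v _ => hterm v
        _ = bound x := by rw [hbdef]
    · push_neg at hx
      have hFx : F n x = 0 := by
        rw [hFdef]
        exact Finset.sum_eq_zero fun k _ => Set.indicator_of_notMem (hx k) _
      rw [hFx, norm_zero, hbdef]
      positivity
  -- pointwise limit
  have h_lim : ∀ x : V → ℝ, Tendsto (fun n => F n x) atTop
      (nhds (Set.indicator {x : V → ℝ | ∀ v, 0 ≤ x v}
        (fun x => f x * Real.exp (Ufun G α β x)) x)) := by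
    intro x
    by_cases hxS : x ∈ {x : V → ℝ | ∀ v, 0 ≤ x v}
    · rw [Set.indicator_of_mem hxS]
      have hxnn : ∀ v, 0 ≤ x v := hxS
      set y : ℕ → V → ℝ := fun n v => ((⌊x v * Real.sqrt n⌋₊ : ℕ) : ℝ) / Real.sqrt n with hydef
      obtain ⟨B, hB⟩ : ∃ B : ℝ, ∀ v, x v ≤ B :=
        ⟨Finset.univ.sup' Finset.univ_nonempty x, fun v => Finset.le_sup' x (Finset.mem_univ v)⟩
      have heq : ∀ᶠ n in atTop, F n x = f (y n) * Real.exp (Wn G α β n (y n)) := by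
        filter_upwards [hE1, hN1.eventually_ge_atTop (B + 1)] with n h1 hNn
        have hs : 0 < Real.sqrt n := lt_of_lt_of_le one_pos h1
        have hflt : ∀ v, (⌊x v * Real.sqrt n⌋₊ : ℕ) < N n + 1 := by
          intro v
          rw [Nat.floor_lt (mul_nonneg (hxnn v) hs.le)]
          have hx1 : x v * Real.sqrt n ≤ B * Real.sqrt n :=
            mul_le_mul_of_nonneg_right (hB v) hs.le
          have hx2 : (B + 1) * Real.sqrt n ≤ (N n : ℝ) := (le_div_iff₀ hs).mp hNn
          have hx3 : B * Real.sqrt n < (B + 1) * Real.sqrt n := by nlinarith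
          push_cast
          linarith
        set k : V → Fin (N n + 1) := fun v => ⟨⌊x v * Real.sqrt n⌋₊, hflt v⟩ with hkdef
        have hmem : x ∈ gridCell (N n) (Real.sqrt n) k := by
          rw [mem_gridCell_iff hs]
          intro v
          refine ⟨?_, ?_⟩
          · exact_mod_cast Nat.floor_le (mul_nonneg (hxnn v) hs.le)
          · exact_mod_cast Nat.lt_floor_add_one (x v * Real.sqrt n)
        have : F n x = f (fun v => ((k v : ℕ) : ℝ) / Real.sqrt n) *
            Real.exp (Wn G α β n fun v => ((k v : ℕ) : ℝ) / Real.sqrt n) := by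
          rw [hFdef]
          exact sum_indicator_gridCell_eq hs hmem _
        rw [this]
      refine Filter.Tendsto.congr' (Filter.EventuallyEq.symm heq) ?_
      have hyx : Tendsto y atTop (nhds x) := by
        rw [tendsto_pi_nhds]
        intro v
        apply tendsto_of_tendsto_of_tendsto_of_le_of_le'
          (g := fun n : ℕ => x v - (Real.sqrt n)⁻¹) (h := fun _ : ℕ => x v)
        · have := tendsto_const_nhds (x := x v) (f := atTop (α := ℕ)) |>.sub inv_sqrt_tendsto
          simpa using this
        · exact tendsto_const_nhds
        · filter_upwards [hE1] with n h1
          have hs : 0 < Real.sqrt n := lt_of_lt_of_le one_pos h1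
          have h9 : x v * Real.sqrt n < (⌊x v * Real.sqrt n⌋₊ : ℝ) + 1 :=
            Nat.lt_floor_add_one _
          have h10 : x v < ((⌊x v * Real.sqrt n⌋₊ : ℝ) + 1) / Real.sqrt n := by
            rwa [lt_div_iff₀ hs]
          have h11 : ((⌊x v * Real.sqrt n⌋₊ : ℝ) + 1) / Real.sqrt n
              = (⌊x v * Real.sqrt n⌋₊ : ℝ) / Real.sqrt n + (Real.sqrt n)⁻¹ := by
            rw [add_div, one_div]
          show x v - (Real.sqrt n)⁻¹ ≤ ((⌊x v * Real.sqrt n⌋₊ : ℕ) : ℝ) / Real.sqrt n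
          push_cast
          linarith
        · filter_upwards [hE1] with n h1
          have hs : 0 < Real.sqrt n := lt_of_lt_of_le one_pos h1
          show ((⌊x v * Real.sqrt n⌋₊ : ℕ) : ℝ) / Real.sqrt n ≤ x v
          rw [div_le_iff₀ hs]
          exact Nat.floor_le (mul_nonneg (hxnn v) hs.le)
      have h7 : Tendsto (fun n => f (y n)) atTop (nhds (f x)) := (hf.tendsto x).comp hyx
      have h8 : Tendsto (fun n => Wn G α β n (y n)) atTop (nhds (Ufun G α β x)) := by
        have hU8 : Tendsto (fun n => Ufun G α β (y n)) atTop (nhds (Ufun G α β x)) :=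
          (hUcont.tendsto x).comp hyx
        have hsum8 : Tendsto (fun n => ∑ v, y n v) atTop (nhds (∑ v, x v)) := by
          have := (continuous_finset_sum (Finset.univ)
            (fun v _ => continuous_apply v)).tendsto x
          exact this.comp hyx
        have hα8 : Tendsto (fun n : ℕ => α / (2 * Real.sqrt n)) atTop (nhds 0) := by
          have heq8 : (fun n : ℕ => α / (2 * Real.sqrt n))
              = fun n : ℕ => (α/2) * (Real.sqrt n)⁻¹ := by
            funext n; ring
          rw [heq8]
          simpa using inv_sqrt_tendsto.const_mul (α/2)
        have hmul8 : Tendsto (fun n : ℕ => α / (2 * Real.sqrt n) * ∑ v, y n v) atTop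
            (nhds (0 * ∑ v, x v)) := hα8.mul hsum8
        rw [zero_mul] at hmul8
        have := hU8.sub hmul8
        rw [sub_zero] at this
        exact this
      have := h7.mul ((Real.continuous_exp.tendsto _).comp h8)
      exact this
    · rw [Set.indicator_of_notMem hxS]
      have hFx0 : ∀ n, F n x = 0 := by
        intro n
        rw [hFdef]
        apply Finset.sum_eq_zero
        intro k _
        apply Set.indicator_of_notMem
        intro hmem
        apply hxS
        intro v
        have hv := hmem v (Set.mem_univ v)
        exact le_trans (div_nonneg (Nat.cast_nonneg _) (Real.sqrt_nonneg _)) hv.1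
      simp only [hFx0]
      exact tendsto_const_nhds
  have hDCT := MeasureTheory.tendsto_integral_filter_of_dominated_convergence
    (μ := volume) bound (Filter.Eventually.of_forall hFmeas) h_bound hbound_int
    (Filter.Eventually.of_forall h_lim)
  rw [MeasureTheory.integral_indicator hSmeas] at hDCT
  refine Filter.Tendsto.congr' ?_ hDCT
  filter_upwards [eventually_ge_atTop 1] with n hn
  have hs : 0 < Real.sqrt n := Real.sqrt_pos.mpr (by exact_mod_cast hn)
  rw [hFdef]
  rw [integral_gridSum hs]
  rw [rpow_half_inv n (Fintype.card V)]
end
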